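/- If Q is a correlated equilibrium of the MRF-induced game, then for every player i ∈ V and every distribution Q'_i on A_i: KL(Q ∥ P) ≤ KL(Q'_i Q_{-i} ∥ P) + ln|A_i|. Equivalently, KL(Q ∥ P) ≤ min_i min_{Q'_i} KL(Q'_i Q_{-i} ∥ P) + ln|A_i|. -/

import Mathlib

open Finset

section helpers
set_option linter.unusedSectionVars false
variable {V : Type*} [Fintype V] [DecidableEq V] {A : V → Type*} [∀ v, Fintype (A v)]
  [∀ v, DecidableEq (A v)] (i : V)

lemma update_piSplitAt_symm (b a : A i) (y : ∀ j : {j // j ≠ i}, A j) :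
    Function.update ((Equiv.piSplitAt i A).symm (b, y)) i a
      = (Equiv.piSplitAt i A).symm (a, y) := by
  funext j
  by_cases h : j = i
  · subst h; simp [Equiv.piSplitAt]
  · simp [Function.update_of_ne h, Equiv.piSplitAt, h]

lemma piSplitAt_symm_apply_same (b : A i) (y : ∀ j : {j // j ≠ i}, A j) :
    (Equiv.piSplitAt i A).symm (b, y) i = b := by simp [Equiv.piSplitAt]

lemma sum_piSplitAt (F : (∀ v, A v) → ℝ) :
    ∑ x, F x = ∑ y : ∀ j : {j // j ≠ i}, A j, ∑ b : A i,
      F ((Equiv.piSplitAt i A).symm (b, y)) := by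
  rw [← Equiv.sum_comp (Equiv.piSplitAt i A).symm F, Fintype.sum_prod_type]
  exact Finset.sum_comm

lemma sum_eq_double (F : (∀ v, A v) → ℝ) (f : A i → (∀ j : {j // j ≠ i}, A j) → ℝ)
    (h : ∀ b y, F ((Equiv.piSplitAt i A).symm (b, y)) = f b y) :
    ∑ x, F x = ∑ y : ∀ j : {j // j ≠ i}, A j, ∑ b : A i, f b y := by
  rw [sum_piSplitAt i F]
  exact Finset.sum_congr rfl fun y _ => Finset.sum_congr rfl fun b _ => h b y

/-- The master transfer identity. -/
lemma TL2 (Q : (∀ v, A v) → ℝ) (h : A i → ℝ) (F : (∀ v, A v) → ℝ) :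
    ∑ x, h (x i) * (∑ a : A i, Q (Function.update x i a)) * F x
      = ∑ b : A i, h b * ∑ x, Q x * F (Function.update x i b) := by
  have hrhs : ∀ b : A i, (∑ x, Q x * F (Function.update x i b))
      = ∑ y : ∀ j : {j // j ≠ i}, A j,
          (∑ c : A i, Q ((Equiv.piSplitAt i A).symm (c, y)))
            * F ((Equiv.piSplitAt i A).symm (b, y)) := by
    intro b
    rw [sum_eq_double i _
      (fun a y => Q ((Equiv.piSplitAt i A).symm (a, y))
        * F ((Equiv.piSplitAt i A).symm (b, y)))
      (fun a y => by rw [update_piSplitAt_symm])]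
    exact Finset.sum_congr rfl fun y _ => (Finset.sum_mul _ _ _).symm
  calc ∑ x, h (x i) * (∑ a : A i, Q (Function.update x i a)) * F x
      = ∑ y : ∀ j : {j // j ≠ i}, A j, ∑ b : A i,
          h b * (∑ c : A i, Q ((Equiv.piSplitAt i A).symm (c, y)))
            * F ((Equiv.piSplitAt i A).symm (b, y)) :=
        sum_eq_double i _ _ (fun b y => by
          rw [piSplitAt_symm_apply_same]
          congr 2
          exact Finset.sum_congr rfl fun a _ => by rw [update_piSplitAt_symm])
    _ = ∑ b : A i, ∑ y : ∀ j : {j // j ≠ i}, A j,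
          h b * ((∑ c : A i, Q ((Equiv.piSplitAt i A).symm (c, y)))
            * F ((Equiv.piSplitAt i A).symm (b, y))) := by
        rw [Finset.sum_comm]
        exact Finset.sum_congr rfl fun b _ => Finset.sum_congr rfl fun y _ => by ring
    _ = ∑ b : A i, h b * ∑ y : ∀ j : {j // j ≠ i}, A j,
          (∑ c : A i, Q ((Equiv.piSplitAt i A).symm (c, y)))
            * F ((Equiv.piSplitAt i A).symm (b, y)) :=
        Finset.sum_congr rfl fun b _ => (Finset.mul_sum _ _ _).symm
    _ = ∑ b : A i, h b * ∑ x, Q x * F (Function.update x i b) :=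
        Finset.sum_congr rfl fun b _ => by rw [hrhs b]

/-- Transfer for update-invariant weight functions. -/
lemma TLinv (Q : (∀ v, A v) → ℝ) (h : A i → ℝ) (G : (∀ v, A v) → ℝ)
    (hG : ∀ x a, G (Function.update x i a) = G x) :
    ∑ x, h (x i) * (∑ a : A i, Q (Function.update x i a)) * G x
      = (∑ b : A i, h b) * ∑ x, Q x * G x := by
  rw [TL2 i Q h G, Finset.sum_mul]
  exact Finset.sum_congr rfl fun b _ => by
    rw [Finset.sum_congr rfl fun x (_ : x ∈ univ) => by rw [hG x b]]

lemma entropy_pointwise (p : ℝ) (hp : 0 ≤ p) (c : ℝ) (hc : 0 < c) :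
    -(p * Real.log c⁻¹) - p * Real.log p ≤ c - p := by
  rcases eq_or_lt_of_le hp with h | h
  · simp [← h]; positivity
  · have hcp : 0 < c / p := by positivity
    have := Real.log_le_sub_one_of_pos hcp
    have h2 : Real.log (c / p) = Real.log c - Real.log p := Real.log_div (ne_of_gt hc) (ne_of_gt h)
    have h3 : p * Real.log (c / p) ≤ p * (c / p - 1) := by nlinarith [h.le]
    rw [h2] at h3
    rw [Real.log_inv]
    have h4 : p * (c / p - 1) = c - p := by field_simp
    nlinarith
end helpers

/-- If `Q` is a correlated equilibrium of the MRF-induced game,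
then for every player `i` and every distribution `Q'i` on `A i`:
`KL(Q ∥ P) ≤ KL(Q'i ⊗ Q₋ᵢ ∥ P) + ln |A i|`. -/
theorem ce_kl_bound_log_card
    {V : Type*} [Fintype V] [DecidableEq V]
    {A : V → Type*} [∀ v, Fintype (A v)] [∀ v, DecidableEq (A v)] [∀ v, Nonempty (A v)]
    (𝒞 : Finset (Finset V))
    (φ : (C : Finset V) → ((j : {v // v ∈ C}) → A j.val) → ℝ)
    (Ψ : (∀ v, A v) → ℝ)
    (hΨ : ∀ x, Ψ x = ∑ C ∈ 𝒞, φ C (fun j => x j.val))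
    (M : V → (∀ v, A v) → ℝ)
    (hM : ∀ i x, M i x = ∑ C ∈ 𝒞.filter (fun C => i ∈ C), φ C (fun j => x j.val))
    (Z : ℝ) (hZ : Z = ∑ x : ∀ v, A v, Real.exp (Ψ x))
    (P : (∀ v, A v) → ℝ) (hP : ∀ x, P x = Real.exp (Ψ x) / Z)
    (Q : (∀ v, A v) → ℝ)
    (hQ0 : ∀ x, 0 ≤ Q x) (hQ1 : ∑ x : ∀ v, A v, Q x = 1)
    (hCE : ∀ (i : V) (xi x'i : A i),
      ∑ x ∈ Finset.univ.filter (fun x : ∀ v, A v => x i = xi),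
          Q x * M i (Function.update x i x'i) ≤
        ∑ x ∈ Finset.univ.filter (fun x : ∀ v, A v => x i = xi), Q x * M i x) :
    ∀ (i : V) (Q'i : A i → ℝ), (∀ a, 0 ≤ Q'i a) → (∑ a : A i, Q'i a = 1) →
      (∑ x : ∀ v, A v, Q x * Real.log (Q x / P x)) ≤
        (∑ x : ∀ v, A v,
            (Q'i (x i) * ∑ a : A i, Q (Function.update x i a)) *
              Real.log ((Q'i (x i) * ∑ a : A i, Q (Function.update x i a)) / P x)) +
          Real.log (Fintype.card (A i)) := by
  intro i Q'i hQ'0 hQ'1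
  classical
  -- basic positivity facts
  have hQm0 : ∀ x, 0 ≤ ∑ a : A i, Q (Function.update x i a) :=
    fun x => Finset.sum_nonneg fun a _ => hQ0 _
  have hQ'nn : ∀ x, 0 ≤ Q'i (x i) * ∑ a : A i, Q (Function.update x i a) :=
    fun x => mul_nonneg (hQ'0 _) (hQm0 x)
  have hZpos : 0 < Z := by
    rw [hZ]
    exact Finset.sum_pos (fun x _ => Real.exp_pos _) Finset.univ_nonempty
  have hPpos : ∀ x, 0 < P x := fun x => by rw [hP]; positivity
  have hQmupd : ∀ x a, (∑ c : A i, Q (Function.update (Function.update x i a) i c))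
      = ∑ c : A i, Q (Function.update x i c) :=
    fun x a => Finset.sum_congr rfl fun c _ => by rw [Function.update_idem]
  -- the product distribution sums to 1
  have hQ'1' : ∑ x, Q'i (x i) * ∑ a : A i, Q (Function.update x i a) = 1 := by
    have h1 : ∑ x, Q'i (x i) * (∑ a : A i, Q (Function.update x i a)) * 1
        = (∑ b : A i, Q'i b) * ∑ x, Q x * 1 :=
      TLinv i Q Q'i (fun _ => (1:ℝ)) (fun _ _ => rfl)
    simp only [mul_one] at h1
    rw [h1, hQ'1, hQ1, one_mul]
  -- KL decomposition
  have hKL : ∀ (W : (∀ v, A v) → ℝ), (∀ x, 0 ≤ W x) → (∑ x, W x) = 1 →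
      ∑ x, W x * Real.log (W x / P x)
        = (∑ x, W x * Real.log (W x)) - (∑ x, W x * Ψ x) + Real.log Z := by
    intro W hW0 hW1
    have pt : ∀ x, W x * Real.log (W x / P x)
        = W x * Real.log (W x) - W x * Ψ x + W x * Real.log Z := by
      intro x
      rcases eq_or_lt_of_le (hW0 x) with h | h
      · simp [← h]
      · have hlogP : Real.log (P x) = Ψ x - Real.log Z := by
          rw [hP, Real.log_div (Real.exp_ne_zero _) (ne_of_gt hZpos), Real.log_exp]
        rw [Real.log_div (ne_of_gt h) (ne_of_gt (hPpos x)), hlogP]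
        ring
    rw [Finset.sum_congr rfl fun x _ => pt x, Finset.sum_add_distrib,
      Finset.sum_sub_distrib, ← Finset.sum_mul, hW1, one_mul]
  -- Step B : entropy monotone under marginalization
  have hQle : ∀ x, Q x ≤ ∑ a : A i, Q (Function.update x i a) := by
    intro x
    have h1 : Q x = Q (Function.update x i (x i)) := by rw [Function.update_eq_self]
    rw [h1]
    exact Finset.single_le_sum (fun a _ => hQ0 _) (Finset.mem_univ (x i))
  have hS1 : (∑ x, Q x * Real.log (Q x))
      ≤ ∑ x, Q x * Real.log (∑ a : A i, Q (Function.update x i a)) := by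
    apply Finset.sum_le_sum
    intro x _
    rcases eq_or_lt_of_le (hQ0 x) with h | h
    · simp [← h]
    · exact mul_le_mul_of_nonneg_left (Real.log_le_log h (hQle x)) (hQ0 x)
  -- Step C : entropy of the product distribution
  have hT1 : (∑ x, (Q'i (x i) * ∑ a : A i, Q (Function.update x i a)) *
        Real.log (Q'i (x i) * ∑ a : A i, Q (Function.update x i a)))
      = (∑ b : A i, Q'i b * Real.log (Q'i b))
        + ∑ x, Q x * Real.log (∑ a : A i, Q (Function.update x i a)) := by
    have pt : ∀ x, (Q'i (x i) * ∑ a : A i, Q (Function.update x i a)) *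
          Real.log (Q'i (x i) * ∑ a : A i, Q (Function.update x i a))
        = (Q'i (x i) * Real.log (Q'i (x i))) * (∑ a : A i, Q (Function.update x i a)) * 1
          + Q'i (x i) * (∑ a : A i, Q (Function.update x i a)) *
              Real.log (∑ a : A i, Q (Function.update x i a)) := by
      intro x
      by_cases h1 : Q'i (x i) = 0
      · simp [h1]
      by_cases h2 : (∑ a : A i, Q (Function.update x i a)) = 0
      · simp [h2]
      rw [Real.log_mul h1 h2]
      ring
    rw [Finset.sum_congr rfl fun x _ => pt x, Finset.sum_add_distrib]
    congr 1
    · have hA : ∑ x, (Q'i (x i) * Real.log (Q'i (x i))) *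
            (∑ a : A i, Q (Function.update x i a)) * 1
          = (∑ b : A i, Q'i b * Real.log (Q'i b)) * ∑ x, Q x * 1 :=
        TLinv i Q (fun b => Q'i b * Real.log (Q'i b)) (fun _ => (1:ℝ)) (fun _ _ => rfl)
      rw [hA]
      simp only [mul_one]
      rw [hQ1, mul_one]
    · have hB : ∑ x, Q'i (x i) * (∑ a : A i, Q (Function.update x i a)) *
            Real.log (∑ a : A i, Q (Function.update x i a))
          = (∑ b : A i, Q'i b) *
              ∑ x, Q x * Real.log (∑ a : A i, Q (Function.update x i a)) :=
        TLinv i Q Q'i (fun x => Real.log (∑ a : A i, Q (Function.update x i a)))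
          (fun x a => by
            show Real.log (∑ c : A i, Q (Function.update (Function.update x i a) i c))
              = Real.log (∑ c : A i, Q (Function.update x i c))
            rw [hQmupd])
      rw [hB, hQ'1, one_mul]
  -- Step A : the potential inequality
  have hΨsplit : ∀ x, Ψ x
      = M i x + ∑ C ∈ 𝒞.filter (fun C => ¬ i ∈ C), φ C (fun j => x j.val) := by
    intro x
    rw [hΨ x, hM i x]
    exact (Finset.sum_filter_add_sum_filter_not 𝒞 _ _).symm
  have hRupd : ∀ (x : ∀ v, A v) (a : A i),
      (∑ C ∈ 𝒞.filter (fun C => ¬ i ∈ C), φ C (fun j => Function.update x i a j.val))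
        = ∑ C ∈ 𝒞.filter (fun C => ¬ i ∈ C), φ C (fun j => x j.val) := by
    intro x a
    apply Finset.sum_congr rfl
    intro C hC
    congr 1
    funext j
    have hji : (j : V) ≠ i := fun h => (Finset.mem_filter.mp hC).2 (h ▸ j.2)
    exact Function.update_of_ne hji _ _
  have hCEsum : ∀ b : A i,
      (∑ x, Q x * M i (Function.update x i b)) ≤ ∑ x, Q x * M i x := by
    intro b
    rw [← Finset.sum_fiberwise Finset.univ (fun x : ∀ v, A v => x i)
        (fun x => Q x * M i (Function.update x i b)),
      ← Finset.sum_fiberwise Finset.univ (fun x : ∀ v, A v => x i)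
        (fun x => Q x * M i x)]
    exact Finset.sum_le_sum fun xi _ => hCE i xi b
  have hQ'M_le : (∑ x, Q'i (x i) * (∑ a : A i, Q (Function.update x i a)) * M i x)
      ≤ ∑ x, Q x * M i x := by
    rw [TL2 i Q Q'i (M i)]
    calc ∑ b : A i, Q'i b * ∑ x, Q x * M i (Function.update x i b)
        ≤ ∑ b : A i, Q'i b * ∑ x, Q x * M i x :=
          Finset.sum_le_sum fun b _ =>
            mul_le_mul_of_nonneg_left (hCEsum b) (hQ'0 b)
      _ = (∑ b : A i, Q'i b) * ∑ x, Q x * M i x := by rw [Finset.sum_mul]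
      _ = ∑ x, Q x * M i x := by rw [hQ'1, one_mul]
  have hQ'R : (∑ x, Q'i (x i) * (∑ a : A i, Q (Function.update x i a)) *
        (∑ C ∈ 𝒞.filter (fun C => ¬ i ∈ C), φ C (fun j => x j.val)))
      = ∑ x, Q x * ∑ C ∈ 𝒞.filter (fun C => ¬ i ∈ C), φ C (fun j => x j.val) := by
    have h1 : ∑ x, Q'i (x i) * (∑ a : A i, Q (Function.update x i a)) *
          (∑ C ∈ 𝒞.filter (fun C => ¬ i ∈ C), φ C (fun j => x j.val))
        = (∑ b : A i, Q'i b) *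
            ∑ x, Q x * ∑ C ∈ 𝒞.filter (fun C => ¬ i ∈ C), φ C (fun j => x j.val) :=
      TLinv i Q Q'i (fun x => ∑ C ∈ 𝒞.filter (fun C => ¬ i ∈ C), φ C (fun j => x j.val))
        (fun x a => hRupd x a)
    rw [h1, hQ'1, one_mul]
  have hsplitW : ∀ (W : (∀ v, A v) → ℝ), ∑ x, W x * Ψ x
      = (∑ x, W x * M i x)
        + ∑ x, W x * ∑ C ∈ 𝒞.filter (fun C => ¬ i ∈ C), φ C (fun j => x j.val) := by
    intro W
    rw [← Finset.sum_add_distrib]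
    exact Finset.sum_congr rfl fun x _ => by rw [hΨsplit x]; ring
  have hTΨle : (∑ x, (Q'i (x i) * ∑ a : A i, Q (Function.update x i a)) * Ψ x)
      ≤ ∑ x, Q x * Ψ x := by
    have h1 : (∑ x, (Q'i (x i) * ∑ a : A i, Q (Function.update x i a)) * Ψ x)
        = (∑ x, Q'i (x i) * (∑ a : A i, Q (Function.update x i a)) * M i x)
          + ∑ x, Q'i (x i) * (∑ a : A i, Q (Function.update x i a)) *
              (∑ C ∈ 𝒞.filter (fun C => ¬ i ∈ C), φ C (fun j => x j.val)) :=
      hsplitW (fun x => Q'i (x i) * ∑ a : A i, Q (Function.update x i a))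
    rw [h1, hsplitW Q, hQ'R]
    exact add_le_add_left hQ'M_le _
  -- Step D : entropy of Q'i is at least -log |A i|
  have hn : (0:ℝ) < (Fintype.card (A i) : ℝ) := by
    have := Fintype.card_pos (α := A i)
    exact_mod_cast this
  have hE : -Real.log (Fintype.card (A i)) ≤ ∑ b : A i, Q'i b * Real.log (Q'i b) := by
    have key : ∀ b : A i,
        -(Q'i b * Real.log ((Fintype.card (A i) : ℝ))) - Q'i b * Real.log (Q'i b)
          ≤ ((Fintype.card (A i) : ℝ))⁻¹ - Q'i b := by
      intro b
      have h1 := entropy_pointwise (Q'i b) (hQ'0 b) ((Fintype.card (A i) : ℝ))⁻¹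
        (by positivity)
      rwa [inv_inv] at h1
    have hsum := Finset.sum_le_sum (fun b (_ : b ∈ (univ : Finset (A i))) => key b)
    have hL : ∑ b : A i, (-(Q'i b * Real.log ((Fintype.card (A i) : ℝ)))
          - Q'i b * Real.log (Q'i b))
        = -Real.log ((Fintype.card (A i) : ℝ)) - ∑ b : A i, Q'i b * Real.log (Q'i b) := by
      rw [Finset.sum_sub_distrib, Finset.sum_neg_distrib, ← Finset.sum_mul, hQ'1, one_mul]
    have hR : ∑ b : A i, (((Fintype.card (A i) : ℝ))⁻¹ - Q'i b) = 0 := by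
      rw [Finset.sum_sub_distrib, Finset.sum_const, hQ'1, Finset.card_univ,
        nsmul_eq_mul, mul_inv_cancel₀ (ne_of_gt hn)]
      ring
    rw [hL, hR] at hsum
    linarith
  -- assemble
  have hKLQ := hKL Q hQ0 hQ1
  have hKLQ' : (∑ x, (Q'i (x i) * ∑ a : A i, Q (Function.update x i a)) *
        Real.log ((Q'i (x i) * ∑ a : A i, Q (Function.update x i a)) / P x))
      = (∑ x, (Q'i (x i) * ∑ a : A i, Q (Function.update x i a)) *
          Real.log (Q'i (x i) * ∑ a : A i, Q (Function.update x i a)))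
        - (∑ x, (Q'i (x i) * ∑ a : A i, Q (Function.update x i a)) * Ψ x)
        + Real.log Z :=
    hKL (fun x => Q'i (x i) * ∑ a : A i, Q (Function.update x i a)) hQ'nn hQ'1'
  rw [hKLQ, hKLQ', hT1]
  linarith [hS1, hTΨle, hE]
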